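/- If F(z) = ∫_a^b ρ(x)/(z−x) dx with ρ continuous and positive on [a,b], then for x' in the open interval (a,b), the limit of the imaginary part of F(x' + iε) as ε → 0⁺ equals −π·ρ(x'). -/

import Mathlib

open Real Filter Complex

/-- Stieltjes–Perron inversion: if `F(z) = ∫_a^b ρ(x)/(z-x) dx` with `ρ` continuous and
positive on `[a,b]`, then for `x' ∈ (a,b)`,
`lim_{ε→0⁺} Im F(x' + iε) = -π ρ(x')`. -/
theorem stieltjes_perron_inversion (a b : ℝ) (hab : a < b)
    (ρ : ℝ → ℝ) (hρc : ContinuousOn ρ (Set.Icc a b))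
    (hρpos : ∀ x ∈ Set.Icc a b, 0 < ρ x)
    (x' : ℝ) (hx' : x' ∈ Set.Ioo a b) :
    Tendsto (fun ε : ℝ =>
        (∫ x in a..b, (ρ x : ℂ) / ((x' : ℂ) + ε * Complex.I - (x : ℂ))).im)
      (nhdsWithin 0 (Set.Ioi 0)) (nhds (-π * ρ x')) := by
  obtain ⟨hax, hxb⟩ := hx'
  have hab' : a ≤ b := hab.le
  set g : ℝ → ℝ := fun x => ρ (Set.projIcc a b hab' x) with hgdef
  have hg : Continuous g := hρc.restrict.comp continuous_projIcc
  have hgeq : ∀ x ∈ Set.Icc a b, g x = ρ x := fun x hx => by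
    simp [hgdef, Set.projIcc_of_mem hab' hx]
  obtain ⟨xm, hxm, hMx⟩ := isCompact_Icc.exists_isMaxOn ⟨a, Set.left_mem_Icc.2 hab'⟩ hρc
  set M := ρ xm with hMdef
  have hgpos : ∀ u, 0 < g u := fun u => hρpos _ (Set.projIcc a b hab' u).2
  have hgbd : ∀ u, |g u| ≤ M := fun u => by
    rw [abs_of_pos (hgpos u)]; exact hMx (Set.projIcc a b hab' u).2
  have hx'm : x' ∈ Set.Icc a b := ⟨hax.le, hxb.le⟩
  set φ : ℝ → ℝ → ℝ := fun ε u =>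
    (Set.Ioc ((a - x')/ε) ((b - x')/ε)).indicator
      (fun u => -g (x' + ε * u) / (1 + u ^ 2)) u with hφdef
  have hcont : ∀ ε : ℝ, Continuous fun u : ℝ => -g (x' + ε * u) / (1 + u ^ 2) := by
    intro ε
    exact ((hg.comp (continuous_const.add (continuous_const.mul continuous_id))).neg).div
      (continuous_const.add (continuous_pow 2)) (fun u => by positivity)
  -- main limit via dominated convergence
  have key : Tendsto (fun ε => ∫ u, φ ε u) (nhdsWithin 0 (Set.Ioi 0))
      (nhds (-π * ρ x')) := by
    have hmeas : ∀ᶠ ε in nhdsWithin 0 (Set.Ioi 0),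
        MeasureTheory.AEStronglyMeasurable (φ ε) MeasureTheory.volume := by
      filter_upwards with ε
      exact ((hcont ε).aestronglyMeasurable).indicator measurableSet_Ioc
    have hbound : ∀ᶠ ε in nhdsWithin 0 (Set.Ioi 0),
        ∀ᵐ u ∂(MeasureTheory.volume : MeasureTheory.Measure ℝ),
          ‖φ ε u‖ ≤ M * (1 + u ^ 2)⁻¹ := by
      filter_upwards with ε
      filter_upwards with u
      have h1 : (0:ℝ) < 1 + u ^ 2 := by positivity
      have hM0 : (0:ℝ) < M := hρpos _ hxm
      by_cases hu : u ∈ Set.Ioc ((a - x')/ε) ((b - x')/ε)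
      · rw [hφdef]
        simp only [Set.indicator_of_mem hu]
        have he : ‖-g (x' + ε * u) / (1 + u ^ 2)‖ = |g (x' + ε * u)| / (1 + u ^ 2) := by
          rw [Real.norm_eq_abs, abs_div, abs_neg, abs_of_pos h1]
        rw [he, ← div_eq_mul_inv]
        gcongr
        exact hgbd _
      · rw [hφdef]
        simp only [Set.indicator_of_notMem hu, norm_zero]
        positivity
    have hint : MeasureTheory.Integrable (fun u : ℝ => M * (1 + u ^ 2)⁻¹)
        MeasureTheory.volume := integrable_inv_one_add_sq.const_mul M
    have hptwise : ∀ᵐ u ∂(MeasureTheory.volume : MeasureTheory.Measure ℝ),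
        Tendsto (fun ε => φ ε u) (nhdsWithin 0 (Set.Ioi 0))
          (nhds ((-(ρ x')) * (1 + u ^ 2)⁻¹)) := by
      filter_upwards with u
      have hA : Tendsto (fun ε : ℝ => (a - x')/ε) (nhdsWithin 0 (Set.Ioi 0)) atBot := by
        have h1 : Tendsto (fun ε : ℝ => (x' - a) * ε⁻¹) (nhdsWithin 0 (Set.Ioi 0)) atTop :=
          tendsto_inv_nhdsGT_zero.const_mul_atTop (by linarith)
        have h2 : (fun ε : ℝ => (a - x')/ε) = fun ε => -((x' - a) * ε⁻¹) := by
          funext ε; field_simp; ring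
        rw [h2]
        exact tendsto_neg_atTop_atBot.comp h1
      have hB : Tendsto (fun ε : ℝ => (b - x')/ε) (nhdsWithin 0 (Set.Ioi 0)) atTop := by
        have h1 : Tendsto (fun ε : ℝ => (b - x') * ε⁻¹) (nhdsWithin 0 (Set.Ioi 0)) atTop :=
          tendsto_inv_nhdsGT_zero.const_mul_atTop (by linarith)
        simpa [div_eq_mul_inv] using h1
      have hev : ∀ᶠ ε in nhdsWithin 0 (Set.Ioi 0),
          φ ε u = -g (x' + ε * u) / (1 + u ^ 2) := by
        filter_upwards [hA.eventually (eventually_lt_atBot u),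
          hB.eventually (eventually_ge_atTop u)] with ε h1 h2
        rw [hφdef]
        exact Set.indicator_of_mem (Set.mem_Ioc.2 ⟨h1, h2⟩) _
      have hc : Continuous fun ε : ℝ => -g (x' + ε * u) / (1 + u ^ 2) :=
        ((hg.comp (continuous_const.add (continuous_id.mul continuous_const))).neg).div
          continuous_const (fun _ => by positivity)
      have hval : -g (x' + 0 * u) / (1 + u ^ 2) = (-(ρ x')) * (1 + u ^ 2)⁻¹ := by
        rw [zero_mul, add_zero, hgeq x' hx'm, div_eq_mul_inv]
      have hT : Tendsto (fun ε : ℝ => -g (x' + ε * u) / (1 + u ^ 2))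
          (nhdsWithin 0 (Set.Ioi 0)) (nhds ((-(ρ x')) * (1 + u ^ 2)⁻¹)) :=
        hval ▸ ((hc.tendsto 0).mono_left nhdsWithin_le_nhds)
      exact hT.congr' (hev.mono fun ε h => h.symm)
    have hlimval : (∫ u : ℝ, (-(ρ x')) * (1 + u ^ 2)⁻¹) = -π * ρ x' := by
      rw [MeasureTheory.integral_const_mul, integral_univ_inv_one_add_sq]; ring
    have := MeasureTheory.tendsto_integral_filter_of_dominated_convergence
      (μ := MeasureTheory.volume) (F := φ) (f := fun u => (-(ρ x')) * (1 + u ^ 2)⁻¹)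
      (bound := fun u => M * (1 + u ^ 2)⁻¹) hmeas hbound hint hptwise
    rwa [hlimval] at this
  -- identify the two families eventually
  apply key.congr'
  filter_upwards [self_mem_nhdsWithin] with ε (hε : ε ∈ Set.Ioi 0)
  have hε0 : (0:ℝ) < ε := hε
  set A := (a - x')/ε with hAdef
  set B := (b - x')/ε with hBdef
  have hAB : A ≤ B := by
    rw [hAdef, hBdef]
    gcongr
  set f₀ : ℝ → ℝ := fun x => -(ε * g x)/((x' - x) ^ 2 + ε ^ 2) with hf₀def
  -- step 1: indicator integral = interval integral
  have step1 : (∫ u, φ ε u) = ∫ u in A..B, -g (x' + ε * u) / (1 + u ^ 2) := by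
    rw [hφdef, MeasureTheory.integral_indicator measurableSet_Ioc,
      intervalIntegral.integral_of_le hAB]
  -- step 2: substitution
  have hpt : ∀ u : ℝ, ε • f₀ (ε * u + x') = -g (x' + ε * u) / (1 + u ^ 2) := by
    intro u
    have h1 : (0:ℝ) < 1 + u ^ 2 := by positivity
    rw [hf₀def, smul_eq_mul, show ε * u + x' = x' + ε * u from by ring]
    have hd : (x' - (x' + ε * u)) ^ 2 + ε ^ 2 ≠ 0 := by positivity
    field_simp
    ring
  have step2 : (∫ u in A..B, -g (x' + ε * u) / (1 + u ^ 2)) = ∫ x in a..b, f₀ x := by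
    have hEA : ε * A + x' = a := by rw [hAdef]; field_simp; ring
    have hEB : ε * B + x' = b := by rw [hBdef]; field_simp; ring
    calc (∫ u in A..B, -g (x' + ε * u) / (1 + u ^ 2))
        = ∫ u in A..B, ε • f₀ (ε * u + x') := by
          exact intervalIntegral.integral_congr fun u _ => (hpt u).symm
      _ = ε • ∫ u in A..B, f₀ (ε * u + x') := intervalIntegral.integral_smul ε _
      _ = ∫ x in ε * A + x'..ε * B + x', f₀ x :=
          intervalIntegral.smul_integral_comp_mul_add f₀ ε x'
      _ = ∫ x in a..b, f₀ x := by rw [hEA, hEB]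
  -- step 3: f₀ is the imaginary part of the complex integrand
  have hwne : ∀ x : ℝ, ((x' : ℂ) + ε * Complex.I - (x : ℂ)) ≠ 0 := by
    intro x h
    have := congrArg Complex.im h
    simp at this
    exact hε0.ne' this
  have him : ∀ x : ℝ, ((g x : ℂ) / ((x' : ℂ) + ε * Complex.I - (x : ℂ))).im = f₀ x := by
    intro x
    have hd : (x' - x) ^ 2 + ε ^ 2 ≠ 0 := by positivity
    rw [hf₀def, Complex.div_im]
    have h2 : Complex.normSq ((x' : ℂ) + ↑ε * Complex.I - ↑x) = (x' - x) ^ 2 + ε ^ 2 := by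
      simp [Complex.normSq_apply]
      ring
    rw [h2]
    simp
    ring
  have hwcont : Continuous fun x : ℝ => (x' : ℂ) + ε * Complex.I - (x : ℂ) :=
    continuous_const.sub Complex.continuous_ofReal
  have hInt : IntervalIntegrable
      (fun x : ℝ => (g x : ℂ) / ((x' : ℂ) + ε * Complex.I - (x : ℂ)))
      MeasureTheory.volume a b :=
    ((Complex.continuous_ofReal.comp hg).div hwcont hwne).intervalIntegrable a b
  have step3 : (∫ x in a..b, f₀ x)
      = (∫ x in a..b, (g x : ℂ) / ((x' : ℂ) + ε * Complex.I - (x : ℂ))).im := by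
    have hcomm := Complex.imCLM.intervalIntegral_comp_comm hInt
    simp only [Complex.imCLM_apply] at hcomm
    rw [← hcomm]
    exact intervalIntegral.integral_congr fun x _ => (him x).symm
  -- step 4: replace g by ρ on [a,b]
  have step4 : (∫ x in a..b, (g x : ℂ) / ((x' : ℂ) + ε * Complex.I - (x : ℂ)))
      = ∫ x in a..b, (ρ x : ℂ) / ((x' : ℂ) + ε * Complex.I - (x : ℂ)) := by
    apply intervalIntegral.integral_congr
    intro x hx
    rw [Set.uIcc_of_le hab'] at hx
    simp only [hgeq x hx]
  rw [step1, step2, step3, step4]
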